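/- For 0 < |p| < 1 and z ∈ ℂ×, the theta function vanishes exactly on the cyclic group generated by p: θ_p(z) = 0 if and only if z = p^k for some integer k. -/

import Mathlib

open Complex

/-- The infinite `q`-Pochhammer symbol `(z; p)_∞ = ∏_{n≥0} (1 − z pⁿ)`. -/
noncomputable def pochInf (p z : ℂ) : ℂ := ∏' n : ℕ, (1 - z * p ^ n)

/-- Jacobi's odd theta function `θ_p(z) = (z; p)_∞ (p/z; p)_∞`. -/
noncomputable def theta (p z : ℂ) : ℂ := pochInf p z * pochInf p (p / z)

lemma tprod_eq_zero_of_eq_zero {f : ℕ → ℂ} {n0 : ℕ} (h : f n0 = 0) :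
    ∏' n, f n = 0 := by
  have : HasProd f 0 := by
    rw [HasProd]
    apply Filter.Tendsto.congr' _ tendsto_const_nhds
    filter_upwards [Filter.eventually_ge_atTop {n0}] with s hs
    exact (Finset.prod_eq_zero (hs (Finset.mem_singleton_self n0)) h).symm
  exact this.tprod_eq

lemma pochInf_eq_zero_iff (p z : ℂ) (hp1 : ‖p‖ < 1) :
    pochInf p z = 0 ↔ ∃ n : ℕ, z * p ^ n = 1 := by
  constructor
  · intro h
    by_contra hc
    push_neg at hc
    have hne : ∀ n : ℕ, 1 - z * p ^ n ≠ 0 := fun n hn => hc n (by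
      have := sub_eq_zero.mp hn; exact this.symm)
    have hsum : Summable fun n : ℕ => z * p ^ n :=
      (summable_geometric_of_norm_lt_one (by simpa using hp1)).mul_left z
    have hlog : Summable fun n : ℕ => Complex.log (1 - z * p ^ n) :=
      hsum.clog_one_sub
    have key := Complex.cexp_tsum_eq_tprod
      (f := fun n => 1 - z * p ^ n) hne hlog
    rw [pochInf, ← key] at h
    exact Complex.exp_ne_zero _ h
  · rintro ⟨n, hn⟩
    exact tprod_eq_zero_of_eq_zero (f := fun n => 1 - z * p ^ n) (n0 := n)
      (by show 1 - z * p ^ n = 0; rw [hn, sub_self])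

/-- For `0 < |p| < 1` and `z ∈ ℂ×`, `θ_p(z) = 0` iff `z = pᵏ` for some `k ∈ ℤ`. -/
theorem theta_zero_iff (p : ℂ) (hp0 : 0 < ‖p‖)
    (hp1 : ‖p‖ < 1) (z : ℂ) (hz : z ≠ 0) :
    theta p z = 0 ↔ ∃ k : ℤ, z = p ^ k := by
  have hp : p ≠ 0 := by simpa using hp0.ne'
  rw [theta, mul_eq_zero, pochInf_eq_zero_iff p z hp1, pochInf_eq_zero_iff p (p/z) hp1]
  constructor
  · rintro (⟨n, hn⟩ | ⟨n, hn⟩)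
    · refine ⟨-n, ?_⟩
      rw [zpow_neg, zpow_natCast]
      exact eq_inv_of_mul_eq_one_left hn
    · refine ⟨n + 1, ?_⟩
      rw [div_mul_eq_mul_div, div_eq_one_iff_eq hz] at hn
      rw [zpow_add_one₀ hp, zpow_natCast, ← hn]
      ring
  · rintro ⟨k, rfl⟩
    rcases le_or_gt k 0 with hk | hk
    · left
      refine ⟨(-k).toNat, ?_⟩
      rw [← zpow_natCast, Int.toNat_of_nonneg (by omega), ← zpow_add₀ hp]
      simp
    · right
      refine ⟨(k - 1).toNat, ?_⟩
      rw [← zpow_natCast, Int.toNat_of_nonneg (by omega), div_mul_eq_mul_div,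
        ← zpow_one_add₀ hp, div_eq_one_iff_eq (zpow_ne_zero k hp)]
      ring_nf
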